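/- arXiv:1608.05065 — 4 statements merged into one kernel-verified Lean document; each statement's English description precedes it below -/
import Mathlib

section
/- For any quasi-order Q, any function 𝒜 : ℕ^ℕ → Q, and any oracle C ∈ ℕ^ℕ, the function 𝔅^C(𝒜) : ℕ^ℕ → Q^ℕ defined by 𝔅^C(𝒜)(X)(e) = 𝒜(PRec_e(C ⊕ X)) satisfies 𝔄(𝔅^C(𝒜)) ≡_w 𝒜, i.e., 𝔄(𝔅^C(𝒜)) and 𝒜 are Q-Wadge equivalent. -/
set_option linter.unusedVariables false
open scoped Classical

namespace MO

/-- Oracle evaluation `Φ_e^X(n)`: run code `e` on input `n` paired with a finite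
approximation `X↾s` of the oracle, for the least stage `s` at which it halts. -/
def OracleEval (e : ℕ) (X : ℕ → ℕ) (n : ℕ) : Part ℕ :=
  Nat.rfindOpt fun s =>
    Nat.Partrec.Code.evaln s (Denumerable.ofNat Nat.Partrec.Code e)
      (Nat.pair n (Encodable.encode (List.ofFn fun i : Fin s => X i)))

/-- `X ≤_T Y` via index `e`. -/
def TRedVia (e : ℕ) (X Y : ℕ → ℕ) : Prop := ∀ n, OracleEval e Y n = Part.some (X n)

/-- Turing reducibility `X ≤_T Y`. -/
def TRed (X Y : ℕ → ℕ) : Prop := ∃ e, TRedVia e X Y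

/-- `X ≡_T Y` via the pair of indices `(i, j)`. -/
def TEquivVia (i j : ℕ) (X Y : ℕ → ℕ) : Prop := TRedVia i X Y ∧ TRedVia j Y X

/-- `φ` is computable from the oracle `C`. -/
def ComputableIn (C : ℕ → ℕ) (φ : ℕ → ℕ) : Prop := ∃ e, TRedVia e φ C

/-- Effective join `C ⊕ X`. -/
def oplus (C X : ℕ → ℕ) : ℕ → ℕ := fun n => if n % 2 = 0 then C (n / 2) else X (n / 2)

variable {Q : Type*} [Preorder Q]

/-- `A ≤_m B` (`Q`-valued) via the (total) computable function with index `e`. -/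
def MRedVia (e : ℕ) (A B : ℕ → Q) : Prop :=
  ∀ n, ∃ m, m ∈ (Denumerable.ofNat Nat.Partrec.Code e).eval n ∧ A n ≤ B m

/-- `A ≡_m B` via the pair of indices `(i, j)`. -/
def MEquivVia (i j : ℕ) (A B : ℕ → Q) : Prop := MRedVia i A B ∧ MRedVia j B A

/-- `Q`-many-one reducibility relative to the oracle `C`:  `A ≤_m^C B`. -/
def QmRedIn (C : ℕ → ℕ) (A B : ℕ → Q) : Prop :=
  ∃ φ : ℕ → ℕ, ComputableIn C φ ∧ ∀ n, A n ≤ B (φ n)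

/-- `f ≤▽_m g`: many-one reducibility on a cone. -/
def ConeLE (f g : (ℕ → ℕ) → ℕ → Q) : Prop :=
  ∃ C, ∀ X, TRed C X → QmRedIn C (f X) (g X)

/-- `f` is uniformly `(≤_T, ≤_m)`-order preserving. -/
def UOP (f : (ℕ → ℕ) → ℕ → Q) : Prop :=
  ∃ u : ℕ → ℕ, Computable u ∧
    ∀ e X Y, TRedVia e X Y → MRedVia (u e) (f X) (f Y)

/-- `f` is uniformly `(≡_T, ≡_m)`-invariant. -/
def UI (f : (ℕ → ℕ) → ℕ → Q) : Prop :=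
  ∃ u : ℕ × ℕ → ℕ × ℕ, Computable u ∧
    ∀ i j X Y, TEquivVia i j X Y →
      MEquivVia (u (i, j)).1 (u (i, j)).2 (f X) (f Y)

/-- `𝔄(f)(n⌢X) = f(X)(n)`. -/
def Afr (f : (ℕ → ℕ) → ℕ → Q) : (ℕ → ℕ) → Q :=
  fun Z => f (fun k => Z (k + 1)) (Z 0)

/-- `Q`-Wadge reducibility between `Q`-valued functions on Baire space. -/
def WRed (A B : (ℕ → ℕ) → Q) : Prop :=
  ∃ θ : (ℕ → ℕ) → ℕ → ℕ, Continuous θ ∧ ∀ X, A X ≤ B (θ X)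

/-- Codes for primitive recursive functionals with one oracle. -/
inductive PRCode
  | zero | succ | left | right | oracle
  | pair (a b : PRCode) | comp (a b : PRCode) | prec (a b : PRCode)

/-- Evaluation of a primitive recursive functional code with oracle `C`. -/
def PRCode.eval (C : ℕ → ℕ) : PRCode → ℕ → ℕ
  | .zero => fun _ => 0
  | .succ => Nat.succ
  | .left => fun n => n.unpair.1
  | .right => fun n => n.unpair.2
  | .oracle => C
  | .pair a b => fun n => Nat.pair (eval C a n) (eval C b n)
  | .comp a b => fun n => eval C a (eval C b n)
  | .prec a b => fun n =>
      Nat.rec (eval C a n.unpair.1)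
        (fun m ih => eval C b (Nat.pair n.unpair.1 (Nat.pair m ih))) n.unpair.2

/-- A surjective numbering of `PRCode`. -/
def PRCode.ofNat : ℕ → PRCode
  | 0 => .zero
  | 1 => .succ
  | 2 => .left
  | 3 => .right
  | 4 => .oracle
  | n + 5 =>
    have hm : n / 3 < n + 5 := lt_of_le_of_lt (Nat.div_le_self n 3) (by omega)
    have _h1 : (n / 3).unpair.1 < n + 5 := lt_of_le_of_lt (Nat.unpair_left_le _) hm
    have _h2 : (n / 3).unpair.2 < n + 5 := lt_of_le_of_lt (Nat.unpair_right_le _) hm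
    match n % 3 with
    | 0 => .pair (ofNat (n / 3).unpair.1) (ofNat (n / 3).unpair.2)
    | 1 => .comp (ofNat (n / 3).unpair.1) (ofNat (n / 3).unpair.2)
    | _ => .prec (ofNat (n / 3).unpair.1) (ofNat (n / 3).unpair.2)

/-- The `e`-th primitive recursive functional `PRec_e`. -/
def PRec (e : ℕ) (X : ℕ → ℕ) : ℕ → ℕ := (PRCode.ofNat e).eval X

/-- `𝔅^C(𝒜)(X)(e) = 𝒜(PRec_e(C ⊕ X))`. -/
def Bfr (C : ℕ → ℕ) (A : (ℕ → ℕ) → Q) : (ℕ → ℕ) → ℕ → Q :=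
  fun X e => A (PRec e (oplus C X))

/-- Composition with a locally constant argument preserves continuity. -/
lemma continuous_comp_arg {f : (ℕ → ℕ) → ℕ → ℕ} {g : (ℕ → ℕ) → ℕ}
    (hf : ∀ m, Continuous fun X => f X m) (hg : Continuous g) :
    Continuous fun X => f X (g X) := by
  rw [← IsLocallyConstant.iff_continuous] at hg ⊢
  have hf' : ∀ m, IsLocallyConstant fun X => f X m := fun m =>
    (IsLocallyConstant.iff_continuous _).2 (hf m)
  rw [IsLocallyConstant.iff_eventually_eq] at hg ⊢
  intro x
  filter_upwards [hg x, ((IsLocallyConstant.iff_eventually_eq _).1 (hf' (g x))) x]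
    with y h1 h2
  rw [h1, h2]

lemma eval_continuous (c : PRCode) : ∀ n, Continuous fun X : ℕ → ℕ => c.eval X n := by
  induction c with
  | zero => exact fun n => continuous_const
  | succ => exact fun n => continuous_const
  | left => exact fun n => continuous_const
  | right => exact fun n => continuous_const
  | oracle => exact fun n => continuous_apply n
  | pair a b iha ihb =>
    intro n
    exact Continuous.comp (continuous_of_discreteTopology
      (f := fun p : ℕ × ℕ => Nat.pair p.1 p.2)) ((iha n).prodMk (ihb n))
  | comp a b iha ihb =>
    intro n
    show Continuous fun X => PRCode.eval X a (PRCode.eval X b n)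
    exact continuous_comp_arg (f := fun X m => PRCode.eval X a m) iha (ihb n)
  | prec a b iha ihb =>
    intro n
    show Continuous fun X => Nat.rec (motive := fun _ => ℕ) (PRCode.eval X a n.unpair.1)
      (fun m ih => PRCode.eval X b (Nat.pair n.unpair.1 (Nat.pair m ih))) n.unpair.2
    induction n.unpair.2 with
    | zero => exact iha _
    | succ m ih =>
      exact continuous_comp_arg (f := fun X k => PRCode.eval X b k) ihb
        (Continuous.comp (continuous_of_discreteTopology
          (f := fun k : ℕ => Nat.pair n.unpair.1 (Nat.pair m k))) ih)

/-- Encoding of `PRCode`, inverse to `PRCode.ofNat`. -/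
def PRCode.enc : PRCode → ℕ
  | .zero => 0
  | .succ => 1
  | .left => 2
  | .right => 3
  | .oracle => 4
  | .pair a b => 3 * Nat.pair a.enc b.enc + 5
  | .comp a b => 3 * Nat.pair a.enc b.enc + 6
  | .prec a b => 3 * Nat.pair a.enc b.enc + 7

lemma PRCode.ofNat_enc : ∀ c : PRCode, PRCode.ofNat c.enc = c := by
  intro c
  induction c with
  | zero => rw [PRCode.enc, PRCode.ofNat]
  | succ => rw [PRCode.enc, PRCode.ofNat]
  | left => rw [PRCode.enc, PRCode.ofNat]
  | right => rw [PRCode.enc, PRCode.ofNat]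
  | oracle => rw [PRCode.enc, PRCode.ofNat]
  | pair a b iha ihb =>
    show PRCode.ofNat (3 * Nat.pair a.enc b.enc + 5) = _
    rw [PRCode.ofNat]
    have h3 : (3 * Nat.pair a.enc b.enc) % 3 = 0 := Nat.mul_mod_right 3 _
    have h4 : (3 * Nat.pair a.enc b.enc) / 3 = Nat.pair a.enc b.enc :=
      Nat.mul_div_cancel_left _ (by norm_num)
    simp [h3, h4, Nat.unpair_pair, iha, ihb]
  | comp a b iha ihb =>
    show PRCode.ofNat (3 * Nat.pair a.enc b.enc + 1 + 5) = _
    rw [PRCode.ofNat]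
    have h3 : (3 * Nat.pair a.enc b.enc + 1) % 3 = 1 := by omega
    have h4 : (3 * Nat.pair a.enc b.enc + 1) / 3 = Nat.pair a.enc b.enc := by omega
    simp [h3, h4, Nat.unpair_pair, iha, ihb]
  | prec a b iha ihb =>
    show PRCode.ofNat (3 * Nat.pair a.enc b.enc + 2 + 5) = _
    rw [PRCode.ofNat]
    have h3 : (3 * Nat.pair a.enc b.enc + 2) % 3 = 2 := by omega
    have h4 : (3 * Nat.pair a.enc b.enc + 2) / 3 = Nat.pair a.enc b.enc := by omega
    simp [h3, h4, Nat.unpair_pair, iha, ihb]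

/-- A code for the identity. -/
def PRCode.idc : PRCode := .pair .left .right

lemma PRCode.eval_idc (X : ℕ → ℕ) (n : ℕ) : PRCode.idc.eval X n = n := by
  simp [PRCode.idc, PRCode.eval, Nat.pair_unpair]

/-- A code for `n ↦ 2 * n + 1`. -/
def PRCode.oddc : PRCode :=
  .comp (.prec .succ (.comp .succ (.comp .succ (.comp .right .right))))
    (.pair .zero .idc)

lemma PRCode.eval_prec_part (X : ℕ → ℕ) (n : ℕ) :
    PRCode.eval X (.prec .succ (.comp .succ (.comp .succ (.comp .right .right))))
      (Nat.pair 0 n) = 2 * n + 1 := by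
  induction n with
  | zero => simp [PRCode.eval, Nat.unpair_pair]
  | succ m ih =>
    have hstep : PRCode.eval X
        (.prec .succ (.comp .succ (.comp .succ (.comp .right .right)))) (Nat.pair 0 (m + 1))
        = PRCode.eval X (.comp .succ (.comp .succ (.comp .right .right)))
            (Nat.pair (Nat.pair 0 (m + 1)).unpair.1
              (Nat.pair m (Nat.rec
                (PRCode.eval X .succ (Nat.pair 0 (m + 1)).unpair.1)
                (fun k ih => PRCode.eval X (.comp .succ (.comp .succ (.comp .right .right)))
                  (Nat.pair (Nat.pair 0 (m + 1)).unpair.1 (Nat.pair k ih))) m))) := by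
      show PRCode.eval X _ (Nat.pair 0 (m + 1)) = _
      conv_lhs => rw [PRCode.eval]
      simp only [Nat.unpair_pair]
    rw [hstep]
    have hm : (Nat.rec (motive := fun _ => ℕ)
        (PRCode.eval X .succ (Nat.pair 0 (m + 1)).unpair.1)
        (fun k ih => PRCode.eval X (.comp .succ (.comp .succ (.comp .right .right)))
          (Nat.pair (Nat.pair 0 (m + 1)).unpair.1 (Nat.pair k ih))) m)
        = 2 * m + 1 := by
      have := ih
      conv_lhs at this => rw [PRCode.eval]
      simp only [Nat.unpair_pair] at this ⊢
      exact this
    rw [hm]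
    show ((Nat.pair (Nat.pair 0 (m+1)).unpair.1 (Nat.pair m (2*m+1))).unpair.2.unpair.2) + 1 + 1
      = 2 * (m + 1) + 1
    simp only [Nat.unpair_pair]
    omega

lemma PRCode.eval_oddc (X : ℕ → ℕ) (n : ℕ) : PRCode.oddc.eval X n = 2 * n + 1 := by
  show PRCode.eval X (.prec .succ (.comp .succ (.comp .succ (.comp .right .right))))
      (PRCode.eval X (.pair .zero .idc) n) = 2 * n + 1
  have h : PRCode.eval X (.pair .zero .idc) n = Nat.pair 0 n := by
    show Nat.pair (PRCode.eval X .zero n) (PRCode.eval X .idc n) = _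
    rw [PRCode.eval_idc]
    rfl
  rw [h, PRCode.eval_prec_part]

/-- A code projecting the right part of the join: `PRec e₀ (C ⊕ X) = X`. -/
def PRCode.projc : PRCode := .comp .oracle .oddc

lemma PRec_projc (C X : ℕ → ℕ) : PRec PRCode.projc.enc (oplus C X) = X := by
  funext n
  show PRCode.eval (oplus C X) (PRCode.ofNat PRCode.projc.enc) n = X n
  rw [PRCode.ofNat_enc]
  show oplus C X (PRCode.oddc.eval (oplus C X) n) = X n
  rw [PRCode.eval_oddc]
  have h1 : ¬ (2 * n + 1) % 2 = 0 := by omega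
  have h2 : (2 * n + 1) / 2 = n := by omega
  simp [oplus, h1, h2]

/-- `𝔄(𝔅^C(𝒜)) ≡_w 𝒜` for every `𝒜 : ℕ^ℕ → Q` and every oracle `C`. -/
theorem afr_bfr_wadge_equiv {Q : Type*} [Preorder Q] (A : (ℕ → ℕ) → Q) (C : ℕ → ℕ) :
    WRed (Afr (Bfr C A)) A ∧ WRed A (Afr (Bfr C A)) := by
  constructor
  · refine ⟨fun Z => PRec (Z 0) (oplus C (fun k => Z (k + 1))), ?_, ?_⟩
    · apply continuous_pi
      intro n
      exact continuous_comp_arg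
        (f := fun Z e => PRec e (oplus C (fun k => Z (k + 1))) n)
        (fun e => (eval_continuous (PRCode.ofNat e) n).comp
          (continuous_pi fun m => by
            unfold oplus
            by_cases h : m % 2 = 0
            · simpa [h] using (continuous_const : Continuous fun _ : ℕ → ℕ => C (m / 2))
            · simpa [h] using continuous_apply (m / 2 + 1)))
        (continuous_apply 0)
    · intro Z
      exact le_refl _
  · refine ⟨fun X n => Nat.casesOn n PRCode.projc.enc X, ?_, ?_⟩
    · apply continuous_pi
      intro n
      cases n with
      | zero => exact continuous_const
      | succ k => exact continuous_apply k
    · intro X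
      show A X ≤ A (PRec PRCode.projc.enc (oplus C X))
      rw [PRec_projc]

end MO
end

section
/- Let Q be a quasi-order and 𝒜, ℬ : ℕ^ℕ → Q with 𝒜 non-self-dual. If there is a set D ⊆ ℕ^ℕ and a continuous θ : D → ℕ^ℕ such that ℬ(X) ≤_Q 𝒜(θ(X)) for all X ∈ D, and the game G_diag(𝒜, ℬ↾D) is determined, then there is a Lipschitz function θ̂ : ℕ^ℕ → ℕ^ℕ such that ℬ(X) ≤_Q 𝒜(θ̂(X)) for all X ∈ D. -/
set_option linter.unusedVariables false
open scoped Classical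

namespace MO

variable {Q : Type*} [Preorder Q]

/-- Remove the passes (`none`s) from Player II's sequence of moves. -/
noncomputable def stripPass (Y : ℕ → Option ℕ) : ℕ → ℕ :=
  fun k => (Y (Nat.nth (fun n => (Y n).isSome = true) k)).getD 0

/-- Player II's play against `X` when following strategy `σ` (with passes allowed). -/
def IIplay (σ : List ℕ → Option ℕ) (X : ℕ → ℕ) : ℕ → Option ℕ :=
  fun n => σ (List.ofFn fun i : Fin (n + 1) => X i)

/-- `σ` is a winning strategy for Player II in the Wadge game `G_w(A, B)`. -/
def WinWII (A B : (ℕ → ℕ) → Q) (σ : List ℕ → Option ℕ) : Prop :=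
  ∀ X : ℕ → ℕ,
    {n | (IIplay σ X n).isSome}.Infinite ∧
    A X ≤ B (stripPass (IIplay σ X))

/-- Player I's play (moving first) against Player II's moves `Y`. -/
def Iplay {α : Type*} (τ : List α → ℕ) (Y : ℕ → α) : ℕ → ℕ :=
  fun n => τ (List.ofFn fun i : Fin n => Y i)

/-- `τ` is a winning strategy for Player I in the Wadge game `G_w(A, B)`. -/
def WinWI (A B : (ℕ → ℕ) → Q) (τ : List (Option ℕ) → ℕ) : Prop :=
  ∀ Y : ℕ → Option ℕ,
    ¬ ({n | (Y n).isSome}.Infinite ∧ A (Iplay τ Y) ≤ B (stripPass Y))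

/-- `τ` is a winning strategy for Player I in the Lipschitz game `G_lip(A, B)`,
in which Player II may never pass. -/
def WinLipI (A B : (ℕ → ℕ) → Q) (τ : List ℕ → ℕ) : Prop :=
  ∀ Y : ℕ → ℕ, ¬ A (Iplay τ Y) ≤ B Y

/-- `B` restricted to the cylinder `[σ]`, viewed as a function on Baire space
via the homeomorphism `[σ] ≅ ℕ^ℕ`. -/
def restrTo (B : (ℕ → ℕ) → Q) (σ : List ℕ) : (ℕ → ℕ) → Q :=
  fun X => B fun i => if i < σ.length then σ.getD i 0 else X (i - σ.length)

/-- `A` is self-dual. -/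
def SelfDual (A : (ℕ → ℕ) → Q) : Prop :=
  ∃ θ : (ℕ → ℕ) → ℕ → ℕ, Continuous θ ∧ ∀ X, ¬ A (θ X) ≤ A X

/-- `F` is Lipschitz: `F(X)↾n` depends only on `X↾n`. -/
def LipschitzFn (F : (ℕ → ℕ) → ℕ → ℕ) : Prop :=
  ∀ X Y : ℕ → ℕ, ∀ n, (∀ i < n, X i = Y i) → ∀ i < n, F X i = F Y i

/-- Player II's play in a pass-free game. -/
def IIplayN (σ : List ℕ → ℕ) (X : ℕ → ℕ) : ℕ → ℕ :=
  fun n => σ (List.ofFn fun i : Fin (n + 1) => X i)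

/-- `σ` is winning for II in `G_diag(A, B↾D)`: II wins iff `Y ∈ D` and `A(X) ≱ B(Y)`. -/
def DiagWinII (A B : (ℕ → ℕ) → Q) (D : Set (ℕ → ℕ)) (σ : List ℕ → ℕ) : Prop :=
  ∀ X : ℕ → ℕ, IIplayN σ X ∈ D ∧ ¬ B (IIplayN σ X) ≤ A X

/-- `τ` is winning for I in `G_diag(A, B↾D)`. -/
def DiagWinI (A B : (ℕ → ℕ) → Q) (D : Set (ℕ → ℕ)) (τ : List ℕ → ℕ) : Prop :=
  ∀ Y : ℕ → ℕ, Y ∈ D → B Y ≤ A (Iplay τ Y)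

/-- If `A` is non-self-dual, continuous reductions into `A` on a domain `D` can be
replaced by Lipschitz ones, granted determinacy of `G_diag(A, B↾D)`. -/
theorem lipschitz_from_continuous {Q : Type*} [Preorder Q] (A B : (ℕ → ℕ) → Q)
    (D : Set (ℕ → ℕ)) (hA : ¬ SelfDual A)
    (θ : (ℕ → ℕ) → ℕ → ℕ) (hθc : ContinuousOn θ D) (hθ : ∀ X ∈ D, B X ≤ A (θ X))
    (hdet : (∃ τ, DiagWinI A B D τ) ∨ ∃ σ, DiagWinII A B D σ) :
    ∃ F : (ℕ → ℕ) → ℕ → ℕ, LipschitzFn F ∧ ∀ X ∈ D, B X ≤ A (F X) := by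
  rcases hdet with ⟨τ, hτ⟩ | ⟨σ, hσ⟩
  · refine ⟨Iplay τ, ?_, fun X hX => hτ X hX⟩
    intro X Y n h i hi
    unfold Iplay
    congr 1
    congr 1
    funext j
    exact h j (j.2.trans hi)
  · exfalso
    apply hA
    refine ⟨fun X => θ (IIplayN σ X), ?_, ?_⟩
    · refine hθc.comp_continuous ?_ (fun X => (hσ X).1)
      refine continuous_pi fun n => ?_
      have h1 : Continuous fun X : ℕ → ℕ => (fun i : Fin (n + 1) => X i) :=
        continuous_pi fun i => continuous_apply _
      exact (continuous_of_discreteTopology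
        (f := fun v : Fin (n + 1) → ℕ => σ (List.ofFn v))).comp h1
    · intro X hle
      exact (hσ X).2 ((hθ _ (hσ X).1).trans hle)

end MO
end

section
/- Every well-quasi-order with no infinite antichains is covered by finitely many directed subsets; in particular, every quasi-order (P, ≤) that is well-founded and has no infinite antichains can be written as a finite union P = D_0 ∪ ... ∪ D_{l-1} where each D_m is directed. -/
set_option linter.unusedVariables false
open scoped Classical

namespace MO

variable {Q : Type*} [Preorder Q]

/-- Erdős–Tarski: a well-founded quasi-order with no infinite antichains is a finite
union of directed subsets. -/
theorem erdos_tarski_directed_cover {α : Type*} [Preorder α]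
    (hwf : ¬ ∃ f : ℕ → α, ∀ n, f (n + 1) < f n)
    (hac : ¬ ∃ f : ℕ → α, ∀ i j, i ≠ j → ¬ f i ≤ f j ∧ ¬ f j ≤ f i) :
    ∃ (l : ℕ) (D : Fin l → Set α),
      (∀ m, DirectedOn (· ≤ ·) (D m)) ∧ (⋃ m, D m) = Set.univ := by
  -- Step 1: the order is a partial well-order (wqo).
  have hpwo : ∀ f : ℕ → α, ∃ m n : ℕ, m < n ∧ f m ≤ f n := by
    intro f
    by_contra hbad
    push_neg at hbad
    haveI : IsTrans α (fun a b : α => b ≤ a) := ⟨fun _ _ _ h1 h2 => le_trans h2 h1⟩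
    obtain ⟨g, hg | hg⟩ :=
      exists_increasing_or_nonincreasing_subseq (fun a b : α => b ≤ a) f
    · exact hwf ⟨fun k => f (g k), fun n =>
        lt_of_le_not_ge (hg n (n + 1) (Nat.lt_succ_self n))
          (hbad _ _ (g.strictMono (Nat.lt_succ_self n)))⟩
    · refine hac ⟨fun k => f (g k), fun i j hij => ?_⟩
      rcases hij.lt_or_gt with h | h
      · exact ⟨hbad _ _ (g.strictMono h), hg _ _ h⟩
      · exact ⟨hg _ _ h, hbad _ _ (g.strictMono h)⟩
  -- Step 2: the lattice of lower sets is well-founded under ⊂.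
  have hlwf : WellFounded ((· < ·) : LowerSet α → LowerSet α → Prop) := by
    rw [RelEmbedding.wellFounded_iff_isEmpty]
    constructor
    intro f
    have hmono : ∀ m n : ℕ, m < n → f n < f m := fun m n h => f.map_rel_iff.2 h
    have hx : ∀ n : ℕ, ∃ x : α, x ∈ f n ∧ x ∉ f (n + 1) := by
      intro n
      obtain ⟨x, hx1, hx2⟩ := Set.exists_of_ssubset (show ((f (n + 1) : Set α)) ⊂ f n from hmono n (n + 1) (Nat.lt_succ_self n))
      exact ⟨x, hx1, hx2⟩
    choose x hx1 hx2 using hx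
    obtain ⟨m, n, hmn, hle⟩ := hpwo x
    have hsub : f n ≤ f (m + 1) := by
      rcases Nat.lt_or_ge (m + 1) n with h | h
      · exact (hmono _ _ h).le
      · have : n = m + 1 := le_antisymm h hmn
        exact this ▸ le_rfl
    exact hx2 m ((f (m + 1)).lower hle (hsub (hx1 n)))
  -- Step 3: well-founded induction on lower sets.
  have main : ∀ D : LowerSet α, ∃ S : Finset (Set α),
      (∀ E ∈ S, DirectedOn (· ≤ ·) E) ∧ ⋃₀ ↑S = (D : Set α) := by
    intro D
    induction D using WellFounded.induction hlwf with
    | _ D IH =>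
      by_cases hdir : DirectedOn (· ≤ ·) (D : Set α)
      · refine ⟨{(D : Set α)}, ?_, by simp⟩
        intro E hE
        rw [Finset.mem_singleton] at hE
        exact hE ▸ hdir
      · rw [DirectedOn] at hdir
        push_neg at hdir
        obtain ⟨a, ha, b, hb, hab⟩ := hdir
        set D1 : LowerSet α := ⟨{x | x ∈ D ∧ ¬ a ≤ x}, fun u v hvu hu =>
          ⟨D.lower hvu hu.1, fun h => hu.2 (h.trans hvu)⟩⟩ with hD1
        set D2 : LowerSet α := ⟨{x | x ∈ D ∧ ¬ b ≤ x}, fun u v hvu hu =>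
          ⟨D.lower hvu hu.1, fun h => hu.2 (h.trans hvu)⟩⟩ with hD2
        have hle1 : D1 ≤ D := fun x hx => hx.1
        have hle2 : D2 ≤ D := fun x hx => hx.1
        have hlt1 : D1 < D := lt_of_le_of_ne hle1 (by
          intro h
          have : a ∈ D1 := h ▸ ha
          exact this.2 le_rfl)
        have hlt2 : D2 < D := lt_of_le_of_ne hle2 (by
          intro h
          have : b ∈ D2 := h ▸ hb
          exact this.2 le_rfl)
        obtain ⟨S1, hS1d, hS1u⟩ := IH D1 hlt1
        obtain ⟨S2, hS2d, hS2u⟩ := IH D2 hlt2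
        refine ⟨S1 ∪ S2, ?_, ?_⟩
        · intro E hE
          rcases Finset.mem_union.1 hE with h | h
          · exact hS1d E h
          · exact hS2d E h
        · rw [Finset.coe_union, Set.sUnion_union, hS1u, hS2u]
          apply Set.Subset.antisymm
          · exact Set.union_subset hle1 hle2
          · intro x hx
            by_cases hax : a ≤ x
            · by_cases hbx : b ≤ x
              · exact absurd hbx (hab x hx hax)
              · exact Or.inr ⟨hx, hbx⟩
            · exact Or.inl ⟨hx, hax⟩
  -- Step 4: conclude for the whole space.
  obtain ⟨S, hSd, hSu⟩ := main ⊤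
  classical
  refine ⟨Fintype.card ↥S, fun m => ((Fintype.equivFin ↥S).symm m : Set α), ?_, ?_⟩
  · intro m
    exact hSd _ ((Fintype.equivFin ↥S).symm m).2
  · have : (⋃ m, (((Fintype.equivFin ↥S).symm m : ↥S) : Set α)) = ⋃₀ ↑S := by
      ext x
      simp only [Set.mem_iUnion, Set.mem_sUnion, Finset.mem_coe]
      constructor
      · rintro ⟨m, hm⟩
        exact ⟨_, ((Fintype.equivFin ↥S).symm m).2, hm⟩
      · rintro ⟨E, hE, hxE⟩
        refine ⟨Fintype.equivFin ↥S ⟨E, hE⟩, ?_⟩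
        simpa using hxE
    rw [this, hSu, LowerSet.coe_top]

end MO
end

section
/- Let Q be a quasi-order and 𝒜, ℬ : ℕ^ℕ → Q such that ℬ is σ-join-irreducible, witnessed by Z ∈ ℕ^ℕ with ℬ ≤_w ℬ↾[Z↾n] for every n. If Player II has a winning strategy in the Wadge game G_w(𝒜, ℬ), then Player II has a winning strategy in the game G_m(𝒜, ℬ) where II cannot pass on the first move. -/
set_option linter.unusedVariables false
open scoped Classical

namespace MO

variable {Q : Type*} [Preorder Q]

/-! ### Auxiliary machinery for `sji_no_first_pass` -/

/-- Combinatorial continuity of a function `ℕ^ℕ → ℕ^ℕ`. -/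
def CC (G : (ℕ → ℕ) → ℕ → ℕ) : Prop :=
  ∀ X k, ∃ m, ∀ X' : ℕ → ℕ, (∀ i < m, X' i = X i) → G X' k = G X k

lemma continuous_cc {θ : (ℕ → ℕ) → ℕ → ℕ} (hθ : Continuous θ) : CC θ := by
  intro X k
  have hck : Continuous fun W : ℕ → ℕ => θ W k := (continuous_apply k).comp hθ
  have hopen : IsOpen ((fun W : ℕ → ℕ => θ W k) ⁻¹' {θ X k}) :=
    (isOpen_discrete _).preimage hck
  have hXmem : X ∈ (fun W : ℕ → ℕ => θ W k) ⁻¹' {θ X k} := by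
    simp
  obtain ⟨s, ⟨y, n, rfl⟩, hXs, hsub⟩ :=
    (PiNat.isTopologicalBasis_cylinders (fun _ : ℕ => ℕ)).exists_subset_of_mem_open
      hXmem hopen
  refine ⟨n, fun X' hX' => ?_⟩
  have hmem : X' ∈ PiNat.cylinder y n := by
    intro i hi
    rw [hX' i hi]
    exact hXs i hi
  simpa using hsub hmem

lemma cc_comp {θ G : (ℕ → ℕ) → ℕ → ℕ} (hθ : CC θ) (hG : CC G) :
    CC (fun X => θ (G X)) := by
  intro X k
  obtain ⟨m1, h1⟩ := hθ (G X) k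
  refine ⟨(Finset.range m1).sup fun j => Classical.choose (hG X j), fun X' hX' => ?_⟩
  refine h1 (G X') fun j hj => Classical.choose_spec (hG X j) X' fun i hi => ?_
  exact hX' i (lt_of_lt_of_le hi
    (Finset.le_sup (f := fun j => Classical.choose (hG X j)) (Finset.mem_range.2 hj)))

lemma cc_strip (σ : List ℕ → Option ℕ)
    (hinf : ∀ X : ℕ → ℕ, {n | ((IIplay σ X n).isSome : Prop)}.Infinite) :
    CC (fun X => stripPass (IIplay σ X)) := by
  intro X k
  have hinfX : {n | (IIplay σ X n).isSome = true}.Infinite := hinf X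
  set nk := Nat.nth (fun n => (IIplay σ X n).isSome = true) k with hnk
  refine ⟨nk + 1, fun X' hX' => ?_⟩
  have hagree : ∀ j ≤ nk, IIplay σ X' j = IIplay σ X j := by
    intro j hj
    unfold IIplay
    have heq : (fun i : Fin (j + 1) => X' i) = fun i : Fin (j + 1) => X i :=
      funext fun i => hX' i (lt_of_lt_of_le i.isLt (Nat.succ_le_succ hj))
    rw [heq]
  have hcount : Nat.count (fun n => (IIplay σ X' n).isSome = true) nk
      = Nat.count (fun n => (IIplay σ X n).isSome = true) nk := by
    rw [Nat.count_eq_card_filter_range, Nat.count_eq_card_filter_range]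
    congr 1
    apply Finset.filter_congr
    intro j hj
    rw [hagree j (le_of_lt (Finset.mem_range.1 hj))]
  have hpk : (IIplay σ X nk).isSome = true := Nat.nth_mem_of_infinite hinfX k
  have hpk' : (IIplay σ X' nk).isSome = true := by rw [hagree nk le_rfl]; exact hpk
  have hcnt : Nat.count (fun n => (IIplay σ X n).isSome = true) nk = k := by
    rw [hnk]; exact Nat.count_nth_of_infinite hinfX k
  have hnth' : Nat.nth (fun n => (IIplay σ X' n).isSome = true) k = nk := by
    rw [← hcnt, ← hcount]
    exact Nat.nth_count hpk'
  show (IIplay σ X' _).getD 0 = (IIplay σ X _).getD 0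
  rw [hnth', hagree nk le_rfl]

/-- `k` is determined by the finite position `l` (for the function `G`). -/
def Det (G : (ℕ → ℕ) → ℕ → ℕ) (l : List ℕ) (k : ℕ) : Prop :=
  ∀ X : ℕ → ℕ, (∀ i < l.length, X i = l.getD i 0) → G X k = G (fun i => l.getD i 0) k

lemma det_mono {G : (ℕ → ℕ) → ℕ → ℕ} {l l' : List ℕ} (h : l <+: l') {k : ℕ}
    (hd : Det G l k) : Det G l' k := by
  have hgetD : ∀ i < l.length, l'.getD i 0 = l.getD i 0 := by
    intro i hi
    obtain ⟨t, rfl⟩ := h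
    exact List.getD_append l t 0 i hi
  intro X hX
  have h1 : G X k = G (fun i => l.getD i 0) k := by
    refine hd X fun i hi => ?_
    rw [hX i (lt_of_lt_of_le hi h.length_le), hgetD i hi]
  have h2 : G (fun i => l'.getD i 0) k = G (fun i => l.getD i 0) k := by
    refine hd _ fun i hi => hgetD i hi
  rw [h1, h2]

/-- The number of consecutively determined coordinates (capped at `l.length`). -/
noncomputable def DD (G : (ℕ → ℕ) → ℕ → ℕ) (l : List ℕ) : ℕ :=
  if h : ∃ k, ¬ Det G l k then min (Nat.find h) l.length else l.length

lemma det_of_lt_DD {G : (ℕ → ℕ) → ℕ → ℕ} {l : List ℕ} {k : ℕ} (h : k < DD G l) :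
    Det G l k := by
  unfold DD at h
  split at h
  · next hh => exact not_not.1 (Nat.find_min hh (lt_of_lt_of_le h (min_le_left _ _)))
  · next hh =>
      push_neg at hh
      exact hh k

lemma DD_le_length {G : (ℕ → ℕ) → ℕ → ℕ} (l : List ℕ) : DD G l ≤ l.length := by
  unfold DD
  split
  · exact min_le_right _ _
  · exact le_rfl

lemma le_DD {G : (ℕ → ℕ) → ℕ → ℕ} {l : List ℕ} {K : ℕ} (hlen : K ≤ l.length)
    (hdet : ∀ k < K, Det G l k) : K ≤ DD G l := by
  unfold DD
  split
  · next hh =>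
      refine le_min ?_ hlen
      by_contra hlt
      exact Nat.find_spec hh |>.elim (hdet _ (Nat.lt_of_not_le hlt) |> absurd |> fun f => f (Nat.find_spec hh))
  · next => exact hlen

/-- Count of Player II's non-pass moves after the first, as a function of
the current position.  `eA G n l` is meant to be used with `n = l.length`. -/
noncomputable def eA (G : (ℕ → ℕ) → ℕ → ℕ) : ℕ → List ℕ → ℕ
  | 0, _ => 0
  | 1, _ => 0
  | (n+2), l =>
      if eA G (n+1) l.dropLast < DD G l then eA G (n+1) l.dropLast + 1
      else eA G (n+1) l.dropLast

noncomputable def eL (G : (ℕ → ℕ) → ℕ → ℕ) (l : List ℕ) : ℕ := eA G l.length l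

lemma eA_one (G : (ℕ → ℕ) → ℕ → ℕ) (l : List ℕ) : eA G 1 l = 0 := by
  simp [eA]

lemma eA_two (G : (ℕ → ℕ) → ℕ → ℕ) (n : ℕ) (l : List ℕ) :
    eA G (n + 2) l = if eA G (n + 1) l.dropLast < DD G l then eA G (n + 1) l.dropLast + 1
      else eA G (n + 1) l.dropLast := by
  simp [eA]

/-- The modified strategy: play `c` first, then follow `G` whenever the next
coordinate is determined. -/
noncomputable def strat (G : (ℕ → ℕ) → ℕ → ℕ) (c : ℕ) (l : List ℕ) : Option ℕ :=
  if l.length = 0 then none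
  else if l.length = 1 then some c
  else if eL G l.dropLast < eL G l then some (G (fun i => l.getD i 0) (eL G l - 1))
  else none

lemma main_construction {Q : Type*} [Preorder Q] (A B : (ℕ → ℕ) → Q) (c : ℕ)
    (G : (ℕ → ℕ) → ℕ → ℕ) (hG : CC G)
    (hred : ∀ X : ℕ → ℕ, A X ≤ B (fun n => if n = 0 then c else G X (n - 1))) :
    ∃ σ : List ℕ → Option ℕ, (∀ x : ℕ, (σ [x]).isSome) ∧ WinWII A B σ := by
  refine ⟨strat G c, fun x => by simp [strat], fun X => ?_⟩
  -- notation
  set L : ℕ → List ℕ := fun n => List.ofFn fun i : Fin n => X i with hL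
  have hlen : ∀ n, (L n).length = n := fun n => List.length_ofFn
  have hdrop : ∀ n, (L (n + 1)).dropLast = L n := by
    intro n
    rw [hL]
    simp only []
    rw [List.ofFn_succ']
    simp [List.concat_eq_append]
  have hgetD : ∀ n i, i < n → (L n).getD i 0 = X i := by
    intro n i hi
    rw [List.getD_eq_getElem _ _ (by rw [hlen]; exact hi)]
    simp [hL]
  set e : ℕ → ℕ := fun n => eL G (L (n + 1)) with he
  have heA : ∀ n, e n = eA G (n + 1) (L (n + 1)) := by
    intro n
    show eL G (L (n + 1)) = _
    unfold eL
    rw [hlen]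
  have he0 : e 0 = 0 := by
    rw [heA 0, eA_one]
  have heS : ∀ n, e (n + 1) = if e n < DD G (L (n + 2)) then e n + 1 else e n := by
    intro n
    rw [heA (n + 1), eA_two, hdrop, ← heA n]
  have hemono : ∀ n, e n ≤ e (n + 1) := by
    intro n
    rw [heS n]
    split <;> omega
  have hestep : ∀ n, e (n + 1) ≤ e n + 1 := by
    intro n
    rw [heS n]
    split <;> omega
  have hemono' : Monotone e := monotone_nat_of_le_succ hemono
  -- play facts
  have hplay : ∀ n, IIplay (strat G c) X n = strat G c (L (n + 1)) := fun n => rfl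
  have hplay0 : IIplay (strat G c) X 0 = some c := by
    rw [hplay 0]
    unfold strat
    rw [hlen]
    simp
  have hplayS : ∀ n, IIplay (strat G c) X (n + 1) =
      if e n < e (n + 1) then some (G (fun i => (L (n + 2)).getD i 0) (e (n + 1) - 1))
      else none := by
    intro n
    rw [hplay (n + 1)]
    unfold strat
    rw [hlen, hdrop]
    norm_num
    rfl
  -- DD grows without bound along X
  have hDDbig : ∀ K : ℕ, ∃ N : ℕ, ∀ n ≥ N, K ≤ DD G (L (n + 1)) := by
    intro K
    refine ⟨max K ((Finset.range K).sup fun k => Classical.choose (hG X k)), fun n hn => ?_⟩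
    have hKn : K ≤ n := le_trans (le_max_left _ _) hn
    refine le_DD (by rw [hlen]; omega) fun k hk => ?_
    have hmk : Classical.choose (hG X k) ≤ n := by
      have h1 : Classical.choose (hG X k) ≤
          (Finset.range K).sup fun k => Classical.choose (hG X k) :=
        Finset.le_sup (f := fun k => Classical.choose (hG X k)) (Finset.mem_range.2 hk)
      have h2 := le_max_right K ((Finset.range K).sup fun k => Classical.choose (hG X k))
      omega
    intro X' hX'
    have h1 : G X' k = G X k := by
      refine Classical.choose_spec (hG X k) X' fun i hi => ?_
      rw [hX' i (by rw [hlen]; omega), hgetD _ i (by omega)]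
    have h2 : G (fun i => (L (n + 1)).getD i 0) k = G X k := by
      refine Classical.choose_spec (hG X k) _ fun i hi => hgetD _ i (by omega)
    rw [h1, h2]
  -- e grows without bound
  have hebig : ∀ K : ℕ, ∃ n, K ≤ e n := by
    intro K
    induction K with
    | zero => exact ⟨0, Nat.zero_le _⟩
    | succ K ih =>
        obtain ⟨n₀, hn₀⟩ := ih
        obtain ⟨N, hN⟩ := hDDbig (K + 1)
        set n := max n₀ (N + 1)
        by_cases hcase : e n < DD G (L (n + 2))
        · refine ⟨n + 1, ?_⟩
          rw [heS n, if_pos hcase]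
          have : K ≤ e n := le_trans hn₀ (hemono' (le_max_left _ _))
          omega
        · refine ⟨n, ?_⟩
          have h1 : K + 1 ≤ DD G (L (n + 2)) := hN (n + 1) (by omega)
          omega
  -- the predicate of non-pass positions
  set p : ℕ → Prop := fun n => (IIplay (strat G c) X n).isSome = true with hp
  have hp0 : p 0 := by rw [hp]; simp [hplay0]
  have hpS : ∀ n, p (n + 1) ↔ e n < e (n + 1) := by
    intro n
    rw [hp]
    simp only [hplayS n]
    split
    · next h => simp [h]
    · next h => simp [h]
  -- infinitude
  -- infinitude
  have hinf : {n | p n}.Infinite := by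
    by_contra hfin
    rw [Set.not_infinite] at hfin
    obtain ⟨b, hb⟩ := hfin.bddAbove
    have hconst : ∀ m : ℕ, e (b + m) = e b := by
      intro m
      induction m with
      | zero => rfl
      | succ m ih =>
          have hnp : ¬ p (b + m + 1) := by
            intro hpn
            have : b + m + 1 ≤ b := hb hpn
            omega
          rw [hpS] at hnp
          have h1 := hemono (b + m)
          have : e (b + m + 1) = e (b + m) := by omega
          rw [show b + (m + 1) = b + m + 1 by ring, this, ih]
    obtain ⟨n, hn⟩ := hebig (e b + 1)
    rcases le_or_gt n b with h | h
    · have := hemono' h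
      omega
    · have := hconst (n - b)
      rw [show b + (n - b) = n by omega] at this
      omega
  -- the count of non-pass moves
  have hcount : ∀ n, Nat.count p (n + 1) = 1 + e n := by
    intro n
    induction n with
    | zero =>
        rw [Nat.count_succ, Nat.count_zero, if_pos hp0, he0]
    | succ n ih =>
        rw [Nat.count_succ, ih]
        by_cases hq : p (n + 1)
        · rw [if_pos hq]
          have := (hpS n).1 hq
          have := hestep n
          omega
        · rw [if_neg hq]
          have h2 : ¬ e n < e (n + 1) := fun hh => hq ((hpS n).2 hh)
          have := hemono n
          omega
  -- identify the stripped play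
  have hstrip : stripPass (IIplay (strat G c) X) = fun n => if n = 0 then c else G X (n - 1) := by
    funext k
    cases k with
    | zero =>
        show (IIplay (strat G c) X (Nat.nth p 0)).getD 0 = c
        rw [Nat.nth_zero_of_zero hp0, hplay0]
        rfl
    | succ k =>
        have hex : ∃ n, k < e n := by
          obtain ⟨n, hn⟩ := hebig (k + 1)
          exact ⟨n, by omega⟩
        have hkn : k < e (Nat.find hex) := Nat.find_spec hex
        have hn0 : Nat.find hex ≠ 0 := by
          intro h0
          rw [h0, he0] at hkn
          omega
        obtain ⟨m, hm⟩ : ∃ m, Nat.find hex = m + 1 := ⟨Nat.find hex - 1, by omega⟩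
        rw [hm] at hkn
        have hme : ¬ k < e m := Nat.find_min hex (by omega)
        have hstepm := hestep m
        have hem : e m = k := by omega
        have hem1 : e (m + 1) = k + 1 := by omega
        have hpm1 : p (m + 1) := (hpS m).2 (by omega)
        have hnth : Nat.nth p (k + 1) = m + 1 := by
          have h1 : Nat.count p (m + 1) = k + 1 := by rw [hcount m, hem]; omega
          rw [← h1]
          exact Nat.nth_count hpm1
        show (IIplay (strat G c) X (Nat.nth p (k + 1))).getD 0 = _
        rw [hnth, hplayS m, if_pos (by omega : e m < e (m + 1))]
        have hDDm : k < DD G (L (m + 2)) := by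
          by_contra hc
          have : e (m + 1) = e m := by
            rw [heS m, if_neg (by omega)]
          omega
        have hdet := det_of_lt_DD hDDm
        have hval : G X k = G (fun i => (L (m + 2)).getD i 0) k := by
          refine hdet X fun i hi => ?_
          rw [hlen] at hi
          exact (hgetD (m + 2) i hi).symm
        simp only [hem1, Nat.add_sub_cancel, ← hval, Option.getD_some]
        simp
  constructor
  · exact hinf
  · rw [hstrip]
    exact hred X
/-- If `B` is σ-join-irreducible (witnessed by `Z` with `B ≤_w B↾[Z↾n]` for all `n`)
and II wins `G_w(A, B)`, then II wins `G_m(A, B)` (no pass on the first move). -/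
theorem sji_no_first_pass {Q : Type*} [Preorder Q] (A B : (ℕ → ℕ) → Q) (Z : ℕ → ℕ)
    (hsji : ∀ n : ℕ, WRed B (restrTo B (List.ofFn fun i : Fin n => Z i)))
    (hwin : ∃ σ, WinWII A B σ) :
    ∃ σ : List ℕ → Option ℕ, (∀ x : ℕ, (σ [x]).isSome) ∧ WinWII A B σ := by
  obtain ⟨σ, hσ⟩ := hwin
  obtain ⟨θ, hθc, hθ⟩ := hsji 1
  set G : (ℕ → ℕ) → ℕ → ℕ := fun X => θ (stripPass (IIplay σ X)) with hGdef
  have hGcc : CC G := cc_comp (continuous_cc hθc) (cc_strip σ fun X => (hσ X).1)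
  refine main_construction A B (Z 0) G hGcc fun X => ?_
  have h1 : A X ≤ B (stripPass (IIplay σ X)) := (hσ X).2
  have h2 := hθ (stripPass (IIplay σ X))
  refine le_trans h1 (le_trans h2 (le_of_eq ?_))
  unfold restrTo
  congr 1
  funext n
  cases n with
  | zero => simp
  | succ n => simp [hGdef]

end MO
end
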